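/- Let V be a vector space with bilinear bracket B and φ a linear map on V. Define T^{(n)}_φ recursively: T^{(0)} = B, T^{(1)} = T_φ the Nijenhuis torsion, and T^{(n+1)}(x,y) = φ²T^{(n)}(x,y) + T^{(n)}(φx,φy) − φ(T^{(n)}(φx,y)+T^{(n)}(x,φy)). Then the explicit formula T^{(n)}(x,y) = Σ_{i,j=0}^{n} (−1)^{i+j} C(n,i) C(n,j) φ^{i+j} B(φ^{n−i}x, φ^{n−j}y) holds for all n ≥ 0 and all x,y ∈ V. -/

import Mathlib

private lemma cn_step {K : Type*} [Field K] {V : Type*} [AddCommGroup V] [Module K V]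
    (n : ℕ) (v : ℕ → V) :
    ∑ i ∈ Finset.range (n+2), ((-1:K)^i * ((n+1).choose i : K)) • v i
      = ∑ i ∈ Finset.range (n+1), ((-1:K)^i * (n.choose i : K)) • v i
        - ∑ i ∈ Finset.range (n+1), ((-1:K)^i * (n.choose i : K)) • v (i+1) := by
  have hA : ∑ i ∈ Finset.range (n+1), ((-1:K)^i * (n.choose i : K)) • v i
      = (∑ i ∈ Finset.range (n+1), ((-1:K)^(i+1) * (n.choose (i+1) : K)) • v (i+1)) + v 0 := by
    have h : ∑ i ∈ Finset.range (n+1), ((-1:K)^i * (n.choose i:K)) • v i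
        = ∑ i ∈ Finset.range (n+2), ((-1:K)^i * (n.choose i:K)) • v i := by
      rw [Finset.sum_range_succ (n := n+1)]
      simp [Nat.choose_succ_self]
    rw [h, Finset.sum_range_succ' _ (n+1)]
    simp
  rw [Finset.sum_range_succ' _ (n+1)]
  have hs : ∀ i ∈ Finset.range (n+1),
      ((-1:K)^(i+1) * (((n+1).choose (i+1)) : K)) • v (i+1)
      = ((-1:K)^(i+1) * ((n.choose (i+1)) : K)) • v (i+1)
        + (-(((-1:K)^i * ((n.choose i) : K)))) • v (i+1) := by
    intro i _
    rw [← add_smul]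
    congr 1
    rw [Nat.choose_succ_succ]
    push_cast
    ring
  rw [Finset.sum_congr rfl hs, Finset.sum_add_distrib]
  simp only [neg_smul, Finset.sum_neg_distrib]
  rw [hA]
  simp
  abel

private lemma cn_step2 {K : Type*} [Field K] {V : Type*} [AddCommGroup V] [Module K V]
    (n : ℕ) (u : ℕ → ℕ → V) :
    ∑ i ∈ Finset.range (n+2), ∑ j ∈ Finset.range (n+2),
        ((-1:K)^(i+j) * ((n+1).choose i : K) * ((n+1).choose j : K)) • u i j
      = ∑ i ∈ Finset.range (n+1), ∑ j ∈ Finset.range (n+1),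
        ((-1:K)^(i+j) * (n.choose i : K) * (n.choose j : K)) •
          (u i j + u (i+1) (j+1) - u i (j+1) - u (i+1) j) := by
  have hc : ∀ (m i j : ℕ) (w : V), ((-1:K)^(i+j) * (m.choose i:K) * (m.choose j:K)) • w
      = ((-1:K)^i * (m.choose i:K)) • (((-1:K)^j * (m.choose j:K)) • w) := by
    intro m i j w
    rw [← mul_smul]
    congr 1
    rw [pow_add]
    ring
  set P : ℕ → V := fun i => ∑ j ∈ Finset.range (n+1), ((-1:K)^j * (n.choose j:K)) • u i j with hP
  set Q : ℕ → V := fun i => ∑ j ∈ Finset.range (n+1), ((-1:K)^j * (n.choose j:K)) • u i (j+1) with hQ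
  calc ∑ i ∈ Finset.range (n+2), ∑ j ∈ Finset.range (n+2),
        ((-1:K)^(i+j) * ((n+1).choose i : K) * ((n+1).choose j : K)) • u i j
      = ∑ i ∈ Finset.range (n+2), ((-1:K)^i * ((n+1).choose i : K)) •
          (∑ j ∈ Finset.range (n+2), ((-1:K)^j * ((n+1).choose j : K)) • u i j) := by
        refine Finset.sum_congr rfl fun i _ => ?_
        rw [Finset.smul_sum]
        exact Finset.sum_congr rfl fun j _ => hc _ _ _ _
    _ = ∑ i ∈ Finset.range (n+2), ((-1:K)^i * ((n+1).choose i : K)) • (P i - Q i) := by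
        refine Finset.sum_congr rfl fun i _ => ?_
        rw [cn_step n (fun j => u i j)]
    _ = ∑ i ∈ Finset.range (n+1), ((-1:K)^i * (n.choose i : K)) • (P i - Q i)
        - ∑ i ∈ Finset.range (n+1), ((-1:K)^i * (n.choose i : K)) • (P (i+1) - Q (i+1)) :=
        cn_step n (fun i => P i - Q i)
    _ = ∑ i ∈ Finset.range (n+1), ((-1:K)^i * (n.choose i : K)) •
          (P i + Q (i+1) - Q i - P (i+1)) := by
        rw [← Finset.sum_sub_distrib]
        refine Finset.sum_congr rfl fun i _ => ?_
        rw [← smul_sub]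
        congr 1
        abel
    _ = ∑ i ∈ Finset.range (n+1), ∑ j ∈ Finset.range (n+1),
        ((-1:K)^(i+j) * (n.choose i : K) * (n.choose j : K)) •
          (u i j + u (i+1) (j+1) - u i (j+1) - u (i+1) j) := by
        refine Finset.sum_congr rfl fun i _ => Eq.symm ?_
        have h1 : ∀ j ∈ Finset.range (n+1),
            ((-1:K)^(i+j) * (n.choose i : K) * (n.choose j : K)) •
              (u i j + u (i+1) (j+1) - u i (j+1) - u (i+1) j)
            = ((-1:K)^i * (n.choose i : K)) • (((-1:K)^j * (n.choose j : K)) •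
              (u i j + u (i+1) (j+1) - u i (j+1) - u (i+1) j)) :=
          fun j _ => hc _ _ _ _
        rw [Finset.sum_congr rfl h1, ← Finset.smul_sum]
        congr 1
        simp only [smul_add, smul_sub, Finset.sum_add_distrib, Finset.sum_sub_distrib, hP, hQ]


/-- The higher (Courant–)Nijenhuis torsions of `φ` relative to a bilinear bracket `B`:
`T⁽⁰⁾ = B` and
`T⁽ⁿ⁺¹⁾(x,y) = φ²T⁽ⁿ⁾(x,y) + T⁽ⁿ⁾(φx,φy) - φ(T⁽ⁿ⁾(φx,y) + T⁽ⁿ⁾(x,φy))`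
(so `T⁽¹⁾` is the usual Nijenhuis torsion). -/
def higherCNtorsion {K V : Type*} [Field K] [AddCommGroup V] [Module K V]
    (φ : Module.End K V) (B : V →ₗ[K] V →ₗ[K] V) : ℕ → V → V → V
  | 0 => fun x y => B x y
  | n + 1 => fun x y =>
      φ (φ (higherCNtorsion φ B n x y)) + higherCNtorsion φ B n (φ x) (φ y)
        - φ (higherCNtorsion φ B n (φ x) y + higherCNtorsion φ B n x (φ y))

/-- The explicit formula
`T⁽ⁿ⁾(x,y) = Σ_{i,j=0}^{n} (-1)^{i+j} C(n,i) C(n,j) φ^{i+j} B(φ^{n-i}x, φ^{n-j}y)`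
holds for all `n ≥ 0`. -/
theorem higherCNtorsion_explicit
    (K : Type*) [Field K] (V : Type*) [AddCommGroup V] [Module K V]
    (B : V →ₗ[K] V →ₗ[K] V) (φ : Module.End K V) :
    ∀ (n : ℕ) (x y : V),
      higherCNtorsion φ B n x y =
        ∑ i ∈ Finset.range (n + 1), ∑ j ∈ Finset.range (n + 1),
          ((-1 : K) ^ (i + j) * (n.choose i : K) * (n.choose j : K)) •
            (φ ^ (i + j)) (B ((φ ^ (n - i)) x) ((φ ^ (n - j)) y)) := by
  intro n
  induction n with
  | zero =>
    intro x y
    simp [higherCNtorsion]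
  | succ n ih =>
    intro x y
    show φ (φ (higherCNtorsion φ B n x y)) + higherCNtorsion φ B n (φ x) (φ y)
        - φ (higherCNtorsion φ B n (φ x) y + higherCNtorsion φ B n x (φ y)) = _
    rw [ih x y, ih (φ x) (φ y), ih (φ x) y, ih x (φ y)]
    rw [show n + 1 + 1 = n + 2 from rfl,
      cn_step2 n (fun i j => (φ ^ (i+j)) (B ((φ ^ (n+1-i)) x) ((φ ^ (n+1-j)) y)))]
    simp only [map_sum, map_add, map_smul, smul_add, smul_sub,
      Finset.sum_add_distrib, Finset.sum_sub_distrib]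
    have e1 : ∀ i ∈ Finset.range (n+1), ∀ j ∈ Finset.range (n+1),
        ((-1:K)^(i+j) * (n.choose i : K) * (n.choose j : K)) •
          φ (φ ((φ ^ (i+j)) (B ((φ ^ (n-i)) x) ((φ ^ (n-j)) y))))
        = ((-1:K)^(i+j) * (n.choose i : K) * (n.choose j : K)) •
          (φ ^ (i+1+(j+1))) (B ((φ ^ (n+1-(i+1))) x) ((φ ^ (n+1-(j+1))) y)) := by
      intro i _ j _
      congr 1
      have h2 : i+1+(j+1) = (i+j)+1+1 := by omega
      rw [Nat.succ_sub_succ, Nat.succ_sub_succ, h2, pow_succ', pow_succ']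
      simp [Module.End.mul_apply]
    have e2 : ∀ i ∈ Finset.range (n+1), ∀ j ∈ Finset.range (n+1),
        ((-1:K)^(i+j) * (n.choose i : K) * (n.choose j : K)) •
          (φ ^ (i+j)) (B ((φ ^ (n-i)) (φ x)) ((φ ^ (n-j)) (φ y)))
        = ((-1:K)^(i+j) * (n.choose i : K) * (n.choose j : K)) •
          (φ ^ (i+j)) (B ((φ ^ (n+1-i)) x) ((φ ^ (n+1-j)) y)) := by
      intro i hi j hj
      rw [Finset.mem_range] at hi hj
      congr 1
      rw [Nat.succ_sub (by omega : i ≤ n), Nat.succ_sub (by omega : j ≤ n),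
        pow_succ, pow_succ]
      simp [Module.End.mul_apply]
    have e3 : ∀ i ∈ Finset.range (n+1), ∀ j ∈ Finset.range (n+1),
        ((-1:K)^(i+j) * (n.choose i : K) * (n.choose j : K)) •
          φ ((φ ^ (i+j)) (B ((φ ^ (n-i)) (φ x)) ((φ ^ (n-j)) y)))
        = ((-1:K)^(i+j) * (n.choose i : K) * (n.choose j : K)) •
          (φ ^ (i+(j+1))) (B ((φ ^ (n+1-i)) x) ((φ ^ (n+1-(j+1))) y)) := by
      intro i hi j hj
      rw [Finset.mem_range] at hi hj
      congr 1
      have h2 : i+(j+1) = (i+j)+1 := by omega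
      rw [Nat.succ_sub_succ, Nat.succ_sub (by omega : i ≤ n), h2, pow_succ',
        pow_succ]
      simp [Module.End.mul_apply]
    have e4 : ∀ i ∈ Finset.range (n+1), ∀ j ∈ Finset.range (n+1),
        ((-1:K)^(i+j) * (n.choose i : K) * (n.choose j : K)) •
          φ ((φ ^ (i+j)) (B ((φ ^ (n-i)) x) ((φ ^ (n-j)) (φ y))))
        = ((-1:K)^(i+j) * (n.choose i : K) * (n.choose j : K)) •
          (φ ^ (i+1+j)) (B ((φ ^ (n+1-(i+1))) x) ((φ ^ (n+1-j)) y)) := by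
      intro i hi j hj
      rw [Finset.mem_range] at hi hj
      congr 1
      have h2 : i+1+j = (i+j)+1 := by omega
      rw [Nat.succ_sub_succ, Nat.succ_sub (by omega : j ≤ n), h2, pow_succ',
        pow_succ]
      simp [Module.End.mul_apply]
    rw [Finset.sum_congr rfl (fun i hi => Finset.sum_congr rfl (fun j hj => e1 i hi j hj)),
      Finset.sum_congr rfl (fun i hi => Finset.sum_congr rfl (fun j hj => e2 i hi j hj)),
      Finset.sum_congr rfl (fun i hi => Finset.sum_congr rfl (fun j hj => e3 i hi j hj)),
      Finset.sum_congr rfl (fun i hi => Finset.sum_congr rfl (fun j hj => e4 i hi j hj))]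
    abel
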